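/- Let G be a 2-tough non-Hamiltonian graph on n ≥ 3 vertices possessing a Hamiltonian path v_1, v_2, …, v_n with x = v_1 and y = v_n non-adjacent and d(x) + d(y) = n − 1. Let S be the set of vertices adjacent to neither x nor y. Then for every v_i ∈ S, both v_{i−1} y and v_{i+1} x are edges of G, and S is an independent set. -/

import Mathlib

open SimpleGraph

/-- A graph `G` is `t`-tough if for every set `S` of vertices such that `G - S` is
disconnected, `t * c(G - S) ≤ |S|`, where `c` counts connected components. -/
def Tough {V : Type*} [Fintype V] (t : ℝ) (G : SimpleGraph V) : Prop :=
  ∀ S : Finset V, ¬ (G.induce ((↑S : Set V)ᶜ)).Connected →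
    t * (Nat.card (G.induce ((↑S : Set V)ᶜ)).ConnectedComponent) ≤ S.card

namespace StmtAux

variable {V : Type*} {G : SimpleGraph V}

def chain (G : SimpleGraph V) (u : ℕ → V) :
    ∀ (a m : ℕ), (∀ k, a ≤ k → k < a + m → G.Adj (u k) (u (k + 1))) → G.Walk (u a) (u (a + m))
  | _, 0, _ => Walk.nil
  | a, m + 1, h =>
    (chain G u a m (fun k hk hk' => h k hk (by omega))).concat (h (a + m) (by omega) (by omega))

lemma chain_support (u : ℕ → V) (a : ℕ) :
    ∀ (m : ℕ) (h : ∀ k, a ≤ k → k < a + m → G.Adj (u k) (u (k + 1))),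
      (chain G u a m h).support = (List.range (m + 1)).map (fun k => u (a + k))
  | 0, h => by simp [chain, List.range_succ]
  | m + 1, h => by
    rw [chain, Walk.support_concat, chain_support u a m]
    simp [List.range_succ, Nat.add_assoc]

lemma chain_edges (u : ℕ → V) (a : ℕ) :
    ∀ (m : ℕ) (h : ∀ k, a ≤ k → k < a + m → G.Adj (u k) (u (k + 1))),
      (chain G u a m h).edges = (List.range m).map (fun k => s(u (a + k), u (a + k + 1)))
  | 0, h => by simp [chain]
  | m + 1, h => by
    rw [chain, Walk.edges_concat, chain_edges u a m]
    simp [List.range_succ, Nat.add_assoc]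

lemma hamOfSeq [Fintype V] [DecidableEq V] {n : ℕ} (hn : 3 ≤ n)
    (u : ℕ → V)
    (hinj : ∀ i j, 1 ≤ i → i ≤ n → 1 ≤ j → j ≤ n → u i = u j → i = j)
    (hsurj : ∀ w : V, ∃ i, 1 ≤ i ∧ i ≤ n ∧ u i = w)
    (hadj : ∀ i, 1 ≤ i → i < n → G.Adj (u i) (u (i + 1)))
    (hclose : G.Adj (u n) (u 1)) : G.IsHamiltonian := by
  intro _
  have h1n : 1 + (n - 1) = n := by omega
  let p : G.Walk (u 1) (u n) :=
    (chain G u 1 (n - 1) (fun k hk hk' => hadj k hk (by omega))).copy rfl (by rw [h1n])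
  have hsupp : p.support = (List.range n).map (fun k => u (1 + k)) := by
    simp only [p, Walk.support_copy, chain_support]
    rw [show n - 1 + 1 = n by omega]
  have hedges : p.edges = (List.range (n - 1)).map (fun k => s(u (1 + k), u (1 + k + 1))) := by
    simp only [p, Walk.edges_copy, chain_edges]
  have hnodup : p.support.Nodup := by
    rw [hsupp]
    refine List.Nodup.map_on ?_ List.nodup_range
    intro x hx y hy hxy
    simp only [List.mem_range] at hx hy
    have := hinj (1 + x) (1 + y) (by omega) (by omega) (by omega) (by omega) hxy
    omega
  have hpath : p.IsPath := Walk.IsPath.mk' hnodup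
  have hne : s(u n, u 1) ∉ p.edges := by
    rw [hedges]
    intro hmem
    simp only [List.mem_map, List.mem_range] at hmem
    obtain ⟨k, hk, hk2⟩ := hmem
    rw [Sym2.eq_iff] at hk2
    rcases hk2 with ⟨h1, h2⟩ | ⟨h1, h2⟩
    · have := hinj (1 + k) n (by omega) (by omega) (by omega) (by omega) h1
      omega
    · have h3 := hinj (1 + k) 1 (by omega) (by omega) (by omega) (by omega) h1
      have h4 := hinj (1 + k + 1) n (by omega) (by omega) (by omega) (by omega) h2
      omega
  refine ⟨u n, Walk.cons hclose p, ?_⟩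
  rw [Walk.isHamiltonianCycle_iff_isCycle_and_support_count_tail_eq_one]
  refine ⟨(Walk.cons_isCycle_iff p hclose).2 ⟨hpath, hne⟩, fun a => ?_⟩
  rw [Walk.support_cons, List.tail_cons]
  obtain ⟨i, hi1, hi2, hi3⟩ := hsurj a
  refine List.count_eq_one_of_mem hnodup ?_
  rw [hsupp]
  simp only [List.mem_map, List.mem_range]
  exact ⟨i - 1, by omega, by rw [show 1 + (i - 1) = i by omega]; exact hi3⟩

end StmtAux

/-- Let `G` be a 2-tough non-Hamiltonian graph on `n ≥ 3` vertices possessing a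
Hamiltonian path `v_1, v_2, …, v_n` with `x = v_1` and `y = v_n` non-adjacent and
`d(x) + d(y) = n - 1`. Let `S` be the set of vertices (other than `x` and `y`)
adjacent to neither `x` nor `y`. Then for every `v_i ∈ S`, both `v_{i-1} y` and
`v_{i+1} x` are edges of `G`, and `S` is an independent set. -/


theorem stmt_12 {V : Type*} [Fintype V] [DecidableEq V] {n : ℕ} (hn : 3 ≤ n)
    (G : SimpleGraph V) [DecidableRel G.Adj]
    (htough : Tough 2 G) (hham : ¬ G.IsHamiltonian)
    (v : ℕ → V)
    (hinj : ∀ i j, 1 ≤ i → i ≤ n → 1 ≤ j → j ≤ n → v i = v j → i = j)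
    (hsurj : ∀ w : V, ∃ i, 1 ≤ i ∧ i ≤ n ∧ v i = w)
    (hpath : ∀ i, 1 ≤ i → i < n → G.Adj (v i) (v (i + 1)))
    (hnadj : ¬ G.Adj (v 1) (v n))
    (hdeg : G.degree (v 1) + G.degree (v n) = n - 1)
    (S : Set V)
    (hS : S = {w | w ≠ v 1 ∧ w ≠ v n ∧ ¬ G.Adj w (v 1) ∧ ¬ G.Adj w (v n)}) :
    (∀ i, 1 ≤ i → i ≤ n → v i ∈ S →
      G.Adj (v (i - 1)) (v n) ∧ G.Adj (v (i + 1)) (v 1)) ∧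
    S.Pairwise (fun a b => ¬ G.Adj a b) := by
  classical
  -- Crossing lemma
  have cross : ∀ j, 1 ≤ j → j ≤ n - 1 → G.Adj (v 1) (v (j + 1)) → G.Adj (v n) (v j) → False := by
    intro j hj1 hj2 hx hy
    by_cases hjn : j = n - 1
    · subst hjn
      rw [show n - 1 + 1 = n by omega] at hx
      exact hnadj hx
    · refine hham (StmtAux.hamOfSeq hn
        (fun k => if k ≤ j then v k else v (n + j + 1 - k)) ?_ ?_ ?_ ?_)
      · intro k l hk1 hk2 hl1 hl2 h
        split_ifs at h with h1 h2 h2 <;>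
          (have := hinj _ _ (by omega) (by omega) (by omega) (by omega) h; omega)
      · intro w
        obtain ⟨i, hi1, hi2, hi3⟩ := hsurj w
        by_cases hij : i ≤ j
        · exact ⟨i, hi1, by omega, by rw [if_pos hij]; exact hi3⟩
        · refine ⟨n + j + 1 - i, by omega, by omega, ?_⟩
          rw [if_neg (by omega), show n + j + 1 - (n + j + 1 - i) = i by omega]
          exact hi3
      · intro k hk1 hk2
        rcases lt_trichotomy k j with h | h | h
        · rw [if_pos (by omega), if_pos (by omega)]
          exact hpath k hk1 (by omega)
        · subst h
          rw [if_pos le_rfl, if_neg (by omega), show n + k + 1 - (k + 1) = n by omega]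
          exact hy.symm
        · rw [if_neg (by omega), if_neg (by omega),
            show n + j + 1 - k = (n + j - k) + 1 by omega,
            show n + j + 1 - (k + 1) = n + j - k by omega]
          exact (hpath (n + j - k) (by omega) (by omega)).symm
      · rw [if_neg (by omega), if_pos (by omega : 1 ≤ j),
          show n + j + 1 - n = j + 1 by omega]
        exact hx.symm
  -- Degree counting
  set A : Finset ℕ := (Finset.Icc 1 (n - 1)).filter (fun j => G.Adj (v 1) (v (j + 1))) with hAdef
  set B : Finset ℕ := (Finset.Icc 1 (n - 1)).filter (fun j => G.Adj (v n) (v j)) with hBdef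
  have hA : A.card = G.degree (v 1) := by
    rw [← SimpleGraph.card_neighborFinset_eq_degree]
    refine Finset.card_bij (fun j _ => v (j + 1)) ?_ ?_ ?_
    · intro j hj
      simp only [hAdef, Finset.mem_filter, Finset.mem_Icc] at hj
      rw [SimpleGraph.mem_neighborFinset]
      exact hj.2
    · intro j1 hj1 j2 hj2 h
      simp only [hAdef, Finset.mem_filter, Finset.mem_Icc] at hj1 hj2
      have := hinj (j1 + 1) (j2 + 1) (by omega) (by omega) (by omega) (by omega) h
      omega
    · intro w hw
      rw [SimpleGraph.mem_neighborFinset] at hw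
      obtain ⟨i, hi1, hi2, hi3⟩ := hsurj w
      have hne : i ≠ 1 := by
        intro h; subst h
        exact G.loopless.irrefl _ (hi3 ▸ hw)
      refine ⟨i - 1, ?_, ?_⟩
      · simp only [hAdef, Finset.mem_filter, Finset.mem_Icc]
        refine ⟨⟨by omega, by omega⟩, ?_⟩
        rw [show i - 1 + 1 = i by omega]
        exact hi3 ▸ hw
      · show v (i - 1 + 1) = w
        rw [show i - 1 + 1 = i by omega]; exact hi3
  have hB : B.card = G.degree (v n) := by
    rw [← SimpleGraph.card_neighborFinset_eq_degree]
    refine Finset.card_bij (fun j _ => v j) ?_ ?_ ?_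
    · intro j hj
      simp only [hBdef, Finset.mem_filter, Finset.mem_Icc] at hj
      rw [SimpleGraph.mem_neighborFinset]
      exact hj.2
    · intro j1 hj1 j2 hj2 h
      simp only [hBdef, Finset.mem_filter, Finset.mem_Icc] at hj1 hj2
      exact hinj j1 j2 (by omega) (by omega) (by omega) (by omega) h
    · intro w hw
      rw [SimpleGraph.mem_neighborFinset] at hw
      obtain ⟨i, hi1, hi2, hi3⟩ := hsurj w
      have hne : i ≠ n := by
        intro h; subst h
        exact G.loopless.irrefl _ (hi3 ▸ hw)
      refine ⟨i, ?_, hi3⟩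
      simp only [hBdef, Finset.mem_filter, Finset.mem_Icc]
      exact ⟨⟨hi1, by omega⟩, hi3 ▸ hw⟩
  have hdis : Disjoint A B := by
    rw [Finset.disjoint_left]
    intro j hjA hjB
    simp only [hAdef, hBdef, Finset.mem_filter, Finset.mem_Icc] at hjA hjB
    exact cross j hjA.1.1 hjA.1.2 hjA.2 hjB.2
  have hunion : A ∪ B = Finset.Icc 1 (n - 1) := by
    refine Finset.eq_of_subset_of_card_le ?_ ?_
    · exact Finset.union_subset (Finset.filter_subset _ _) (Finset.filter_subset _ _)
    · rw [Finset.card_union_of_disjoint hdis, hA, hB, hdeg, Nat.card_Icc]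
      omega
  have key : ∀ j, 1 ≤ j → j ≤ n - 1 → G.Adj (v 1) (v (j + 1)) ∨ G.Adj (v n) (v j) := by
    intro j h1 h2
    have : j ∈ A ∪ B := by rw [hunion]; exact Finset.mem_Icc.2 ⟨h1, h2⟩
    rw [Finset.mem_union] at this
    rcases this with h | h
    · left; exact (Finset.mem_filter.1 h).2
    · right; exact (Finset.mem_filter.1 h).2
  -- Part 1
  have part1 : ∀ i, 1 ≤ i → i ≤ n → v i ∈ S →
      G.Adj (v (i - 1)) (v n) ∧ G.Adj (v (i + 1)) (v 1) := by
    intro i h1 h2 hiS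
    rw [hS] at hiS
    obtain ⟨hne1, hnen, hnx, hny⟩ := hiS
    have hi1 : i ≠ 1 := fun h => hne1 (congrArg v h)
    have hin : i ≠ n := fun h => hnen (congrArg v h)
    constructor
    · rcases key (i - 1) (by omega) (by omega) with h | h
      · rw [show i - 1 + 1 = i by omega] at h
        exact absurd h.symm hnx
      · exact h.symm
    · rcases key i (by omega) (by omega) with h | h
      · exact h.symm
      · exact absurd h.symm hny
  refine ⟨part1, ?_⟩
  -- Independence
  have key2 : ∀ i j, 1 ≤ i → i ≤ n → 1 ≤ j → j ≤ n → i < j → v i ∈ S → v j ∈ S →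
      ¬ G.Adj (v i) (v j) := by
    intro i j hi1 hi2 hj1 hj2 hij hiS hjS hadjij
    obtain ⟨_, hxi⟩ := part1 i hi1 hi2 hiS
    obtain ⟨hyj, _⟩ := part1 j hj1 hj2 hjS
    rw [hS] at hiS hjS
    obtain ⟨hne1i, hneni, hnxi, hnyi⟩ := hiS
    obtain ⟨hne1j, hnenj, hnxj, hnyj⟩ := hjS
    have hi1' : i ≠ 1 := fun h => hne1i (congrArg v h)
    have hin' : i ≠ n := fun h => hneni (congrArg v h)
    have hj1' : j ≠ 1 := fun h => hne1j (congrArg v h)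
    have hjn' : j ≠ n := fun h => hnenj (congrArg v h)
    by_cases hj : j = i + 1
    · subst hj
      exact hnxj hxi
    · have hij2 : i + 2 ≤ j := by omega
      refine hham (StmtAux.hamOfSeq hn
        (fun k => if k ≤ i then v k else if k ≤ i + (n - j) + 1 then v (j + k - i - 1)
          else v (i + n + 1 - k)) ?_ ?_ ?_ ?_)
      · intro k l hk1 hk2 hl1 hl2 h
        split_ifs at h <;>
          (have := hinj _ _ (by omega) (by omega) (by omega) (by omega) h; omega)
      · intro w
        obtain ⟨m, hm1, hm2, hm3⟩ := hsurj w
        by_cases hma : m ≤ i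
        · exact ⟨m, hm1, by omega, by rw [if_pos hma]; exact hm3⟩
        · by_cases hmb : j ≤ m
          · refine ⟨m - j + i + 1, by omega, by omega, ?_⟩
            rw [if_neg (by omega), if_pos (by omega),
              show j + (m - j + i + 1) - i - 1 = m by omega]
            exact hm3
          · refine ⟨i + n + 1 - m, by omega, by omega, ?_⟩
            rw [if_neg (by omega), if_neg (by omega),
              show i + n + 1 - (i + n + 1 - m) = m by omega]
            exact hm3
      · intro k hk1 hk2
        rcases lt_trichotomy k i with h | h | h
        · rw [if_pos (by omega), if_pos (by omega)]
          exact hpath k hk1 (by omega)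
        · subst h
          rw [if_pos le_rfl, if_neg (by omega), if_pos (by omega),
            show j + (k + 1) - k - 1 = j by omega]
          exact hadjij
        · rcases lt_trichotomy k (i + (n - j) + 1) with h' | h' | h'
          · rw [if_neg (by omega), if_pos (by omega), if_neg (by omega), if_pos (by omega),
              show j + (k + 1) - i - 1 = (j + k - i - 1) + 1 by omega]
            exact hpath (j + k - i - 1) (by omega) (by omega)
          · subst h'
            rw [if_neg (by omega), if_pos le_rfl, if_neg (by omega), if_neg (by omega),
              show j + (i + (n - j) + 1) - i - 1 = n by omega,
              show i + n + 1 - (i + (n - j) + 1 + 1) = j - 1 by omega]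
            exact hyj.symm
          · rw [if_neg (by omega), if_neg (by omega), if_neg (by omega), if_neg (by omega),
              show i + n + 1 - k = (i + n - k) + 1 by omega,
              show i + n + 1 - (k + 1) = i + n - k by omega]
            exact (hpath (i + n - k) (by omega) (by omega)).symm
      · rw [if_neg (by omega), if_neg (by omega), if_pos (by omega : 1 ≤ i),
          show i + n + 1 - n = i + 1 by omega]
        exact hxi
  intro a ha b hb hne hadj
  obtain ⟨ia, hia1, hia2, hia3⟩ := hsurj a
  obtain ⟨ib, hib1, hib2, hib3⟩ := hsurj b
  subst hia3 hib3
  rcases lt_trichotomy ia ib with h | h | h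
  · exact key2 ia ib hia1 hia2 hib1 hib2 h ha hb hadj
  · exact hne (congrArg v h)
  · exact key2 ib ia hib1 hib2 hia1 hia2 h hb ha hadj.symm
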